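/- arXiv:2303.17298 — 7 statements merged into one kernel-verified Lean document; each statement's English description precedes it below -/
import Mathlib

section
/- Suppose n > ((eg+1)b² + m(eg+1)b)/(me) and a₄ < a < e(m+b)/b, where a₄ = ([en − (b−m)(eg+1)] + √(4m(eg+1)[ne − b(eg+1)]))/n. Then Δ = a₂² − 4a₁a₃ > 0, a₃ > 0, a₂ < 0, and the quadratic a₁y² + a₂y + a₃ = 0 has two distinct positive roots y₁ = (−a₂ + √Δ)/(2a₁) and y₂ = (−a₂ − √Δ)/(2a₁). -/
set_option maxHeartbeats 1600000 in
theorem two_distinct_positive_roots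
    (a b e g m n : ℝ) (hb : 0 < b) (hg : 0 < g) (hm : 0 < m) (hn : 0 < n)
    (he0 : 0 < e) (he1 : e < 1)
    (a1 a2 a3 a4 Δ y1 y2 : ℝ)
    (ha1 : a1 = (e * g + 1) * n)
    (ha2 : a2 = (b + m) * (e * g + 1) + n * (e - a))
    (ha3 : a3 = e * (b + m) - a * b)
    (ha4 : a4 = ((e * n - (b - m) * (e * g + 1)) +
        Real.sqrt (4 * m * (e * g + 1) * (n * e - b * (e * g + 1)))) / n)
    (hΔ : Δ = a2 ^ 2 - 4 * a1 * a3)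
    (hy1 : y1 = (-a2 + Real.sqrt Δ) / (2 * a1))
    (hy2 : y2 = (-a2 - Real.sqrt Δ) / (2 * a1))
    (hn' : n > ((e * g + 1) * b ^ 2 + m * (e * g + 1) * b) / (m * e))
    (ha' : a4 < a) (ha'' : a < e * (m + b) / b) :
    Δ > 0 ∧ a3 > 0 ∧ a2 < 0 ∧
      0 < y2 ∧ y2 < y1 ∧
      a1 * y1 ^ 2 + a2 * y1 + a3 = 0 ∧ a1 * y2 ^ 2 + a2 * y2 + a3 = 0 := by
  set k := e * g + 1 with hk_def
  have hk : 0 < k := by positivity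
  -- from hn'
  have hme : 0 < m * e := by positivity
  have hn'' : (k * b ^ 2 + m * k * b) < n * (m * e) := by
    rw [gt_iff_lt, div_lt_iff₀ hme] at hn'
    linarith
  have hnebk : 0 < n * e - b * k := by nlinarith
  have hsarg : 0 ≤ 4 * m * k * (n * e - b * k) := by positivity
  set s := Real.sqrt (4 * m * k * (n * e - b * k)) with hs_def
  have hs2 : s ^ 2 = 4 * m * k * (n * e - b * k) := Real.sq_sqrt hsarg
  have hs_pos : 0 < s := Real.sqrt_pos.mpr (by positivity)
  have hs_gt : 2 * b * k < s := by
    have h2 : (2 * b * k) ^ 2 < s ^ 2 := by nlinarith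
    exact lt_of_pow_lt_pow_left₀ 2 hs_pos.le h2
  -- a > a4
  have hna : e * n - (b - m) * k + s < n * a := by
    rw [ha4, div_lt_iff₀ hn] at ha'
    linarith
  have ha2neg : a2 < 0 := by
    rw [ha2]
    nlinarith
  have ha3pos : a3 > 0 := by
    rw [lt_div_iff₀ hb] at ha''
    rw [ha3]; nlinarith
  have ha1pos : 0 < a1 := by rw [ha1]; positivity
  have hΔpos : Δ > 0 := by
    have key : Δ = (n * a - (e * n - (b - m) * k) - s) *
        (n * a - (e * n - (b - m) * k) + s) := by
      rw [hΔ, ha1, ha2, ha3]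
      linear_combination hs2
    rw [key]
    have h1 : 0 < n * a - (e * n - (b - m) * k) - s := by linarith
    have h2 : 0 < n * a - (e * n - (b - m) * k) + s := by linarith
    positivity
  obtain ⟨t, ht_def⟩ : ∃ t : ℝ, Real.sqrt Δ = t := ⟨_, rfl⟩
  rw [ht_def] at hy1 hy2
  have ht2 : t ^ 2 = Δ := by rw [← ht_def]; exact Real.sq_sqrt hΔpos.le
  have ht_pos : 0 < t := ht_def ▸ Real.sqrt_pos.mpr hΔpos
  have ht_lt : t < -a2 := by
    have h4 : (0:ℝ) < 4 * a1 * a3 := by positivity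
    have hsq : t ^ 2 < (-a2) ^ 2 := by
      calc t ^ 2 = a2 ^ 2 - 4 * a1 * a3 := by rw [ht2, hΔ]
        _ < a2 ^ 2 := by linarith
        _ = (-a2) ^ 2 := by ring
    exact lt_of_pow_lt_pow_left₀ 2 (by linarith) hsq
  have hy2pos : 0 < y2 := by
    rw [hy2]
    apply div_pos (by linarith) (by linarith)
  have hlt : y2 < y1 := by
    rw [hy1, hy2]
    apply (div_lt_div_iff_of_pos_right (by linarith : (0:ℝ) < 2 * a1)).mpr
    linarith
  have ha1ne : (2 * a1) ≠ 0 := ne_of_gt (by linarith)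
  have heq1 : a1 * y1 ^ 2 + a2 * y1 + a3 = 0 := by
    rw [hy1]
    field_simp
    linear_combination ht2 + hΔ
  have heq2 : a1 * y2 ^ 2 + a2 * y2 + a3 = 0 := by
    rw [hy2]
    field_simp
    linear_combination ht2 + hΔ
  exact ⟨hΔpos, ha3pos, ha2neg, hy2pos, hlt, heq1, heq2⟩
end

section
/- Suppose n > ((eg+1)b² + m(eg+1)b)/(me) and a = a₄ := ([en − (b−m)(eg+1)] + √(4m(eg+1)[ne − b(eg+1)]))/n. Then the discriminant Δ = a₂² − 4a₁a₃ equals zero and the quadratic a₁y² + a₂y + a₃ = 0 has exactly one (double) positive root y₃ = −a₂/(2a₁). -/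
theorem double_positive_root
    (a b e g m n : ℝ) (hb : 0 < b) (hg : 0 < g) (hm : 0 < m) (hn : 0 < n)
    (he0 : 0 < e) (he1 : e < 1)
    (a1 a2 a3 y3 : ℝ)
    (ha1 : a1 = (e * g + 1) * n)
    (ha2 : a2 = (b + m) * (e * g + 1) + n * (e - a))
    (ha3 : a3 = e * (m + b) - a * b)
    (hy3 : y3 = -a2 / (2 * a1))
    (hn' : n > ((e * g + 1) * b ^ 2 + m * (e * g + 1) * b) / (m * e))
    (ha : a = ((e * n - (b - m) * (e * g + 1)) +
        Real.sqrt (4 * m * (e * g + 1) * (n * e - b * (e * g + 1)))) / n) :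
    a2 ^ 2 - 4 * a1 * a3 = 0 ∧ 0 < y3 ∧
      a1 * y3 ^ 2 + a2 * y3 + a3 = 0 ∧
      ∀ y : ℝ, a1 * y ^ 2 + a2 * y + a3 = 0 → y = y3 := by
  have hk : 0 < e * g + 1 := by positivity
  have hme : 0 < m * e := by positivity
  have hn'' : ((e * g + 1) * b ^ 2 + m * (e * g + 1) * b) < n * (m * e) :=
    (div_lt_iff₀ hme).mp hn'
  have harg : 0 ≤ 4 * m * (e * g + 1) * (n * e - b * (e * g + 1)) := by
    nlinarith [sq_nonneg b, mul_pos hb hk]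
  set s := Real.sqrt (4 * m * (e * g + 1) * (n * e - b * (e * g + 1))) with hs
  have hsq : s ^ 2 = 4 * m * (e * g + 1) * (n * e - b * (e * g + 1)) :=
    Real.sq_sqrt harg
  have hsnn : 0 ≤ s := Real.sqrt_nonneg _
  have ha2' : a2 = 2 * b * (e * g + 1) - s := by
    rw [ha2, ha]; field_simp; ring
  have ha3' : n * a3 = n * e * (m + b) -
      b * ((e * n - (b - m) * (e * g + 1)) + s) := by
    rw [ha3, ha]; field_simp
  have hdisc : a2 ^ 2 - 4 * a1 * a3 = 0 := by
    rw [ha2', ha1]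
    linear_combination hsq - 4 * (e * g + 1) * ha3'
  have ha1pos : 0 < a1 := by rw [ha1]; positivity
  have hs2big : (2 * b * (e * g + 1)) ^ 2 < s ^ 2 := by nlinarith
  have ha2neg : a2 < 0 := by
    rw [ha2']
    nlinarith [mul_pos hb hk]
  have hy3pos : 0 < y3 := by
    rw [hy3]
    apply div_pos (by linarith) (by linarith)
  refine ⟨hdisc, hy3pos, ?_, ?_⟩
  · rw [hy3]
    field_simp [ha1pos.ne']
    linear_combination (-1) * hdisc
  · intro y hy
    have h0 : a1 * (y - y3) ^ 2 = 0 := by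
      rw [hy3]
      field_simp [ha1pos.ne']
      linear_combination 4 * a1 * hy + hdisc
    have := pow_eq_zero_iff (n := 2) (by norm_num) |>.mp
      ((mul_eq_zero.mp h0).resolve_left (ne_of_gt ha1pos))
    linarith [sub_eq_zero.mp this]
end

section
/- For an endemic equilibrium (x, y) with y > 0 satisfying x/(1+gy) = 1 + m/(b+ny), the trace of the Jacobian satisfies tr(J) = −H(y)/((1+gy)(b+ny)²) where H(y) = [e + (eg+g+1)y](b+ny)² − m(n−bg)y. -/
theorem trace_formula_at_endemic_equilibrium
    (a b e g m n x y : ℝ) (ha : 0 < a) (hb : 0 < b) (hg : 0 < g) (hm : 0 < m)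
    (hn : 0 < n) (he : 0 < e) (hy : 0 < y)
    (heq : x / (1 + g * y) = 1 + m / (b + n * y)) :
    (-e - y / (1 + g * y)) + (x / (1 + g * y) ^ 2 - 1 - m * b / (b + n * y) ^ 2) =
      -((e + (e * g + g + 1) * y) * (b + n * y) ^ 2 - m * (n - b * g) * y) /
        ((1 + g * y) * (b + n * y) ^ 2) := by
  have h1 : (0:ℝ) < 1 + g * y := by positivity
  have h2 : (0:ℝ) < b + n * y := by positivity
  have hx : x = (1 + m / (b + n * y)) * (1 + g * y) := by
    field_simp at heq ⊢; linarith [heq]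
  subst hx
  field_simp
  ring
end

section
/- For an endemic equilibrium (x, y) with y > 0 satisfying x/(1+gy) = 1 + m/(b+ny), the determinant of the Jacobian satisfies det(J) = y·M(y)/((1+gy)(b+ny)²) where M(y) = (eg+1)(b+ny)² + m[b(eg+1) − ne]. -/
theorem det_formula_at_endemic_equilibrium
    (a b e g m n x y : ℝ) (ha : 0 < a) (hb : 0 < b) (hg : 0 < g) (hm : 0 < m)
    (hn : 0 < n) (he : 0 < e) (hy : 0 < y)
    (heq : x / (1 + g * y) = 1 + m / (b + n * y)) :
    (-e - y / (1 + g * y)) * (x / (1 + g * y) ^ 2 - 1 - m * b / (b + n * y) ^ 2) -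
        (-(x / (1 + g * y) ^ 2)) * (y / (1 + g * y)) =
      y * ((e * g + 1) * (b + n * y) ^ 2 + m * (b * (e * g + 1) - n * e)) /
        ((1 + g * y) * (b + n * y) ^ 2) := by
  have h1 : (1 + g * y) ≠ 0 := by positivity
  have h2 : (b + n * y) ≠ 0 := by positivity
  have hx : x = (1 + m / (b + n * y)) * (1 + g * y) := by
    field_simp at heq ⊢; linarith [heq]
  subst hx
  field_simp
  ring
end

section
/- Suppose n > ((eg+1)b² + m(eg+1)b)/(me) and a = a₄, and let y₃ = −a₂/(2a₁) be the double positive root of a₁y² + a₂y + a₃ = 0. Then M(y₃) = (eg+1)(b+ny₃)² + m[b(eg+1) − ne] = 0, so the determinant of the Jacobian at the equilibrium E₃ vanishes (the equilibrium is degenerate). -/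
theorem E3_degenerate
    (b e g m n : ℝ) (hb : 0 < b) (hg : 0 < g) (hm : 0 < m) (hn : 0 < n)
    (he0 : 0 < e) (he1 : e < 1)
    (a4 a1 a2 y3 : ℝ)
    (ha4 : a4 = ((e * n - (b - m) * (e * g + 1)) +
        Real.sqrt (4 * m * (e * g + 1) * (n * e - b * (e * g + 1)))) / n)
    (ha1 : a1 = (e * g + 1) * n)
    (ha2 : a2 = (b + m) * (e * g + 1) + n * (e - a4))
    (hy3 : y3 = -a2 / (2 * a1))
    (hn' : n > ((e * g + 1) * b ^ 2 + m * (e * g + 1) * b) / (m * e)) :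
    (e * g + 1) * (b + n * y3) ^ 2 + m * (b * (e * g + 1) - n * e) = 0 ∧
      y3 * ((e * g + 1) * (b + n * y3) ^ 2 + m * (b * (e * g + 1) - n * e)) /
        ((1 + g * y3) * (b + n * y3) ^ 2) = 0 := by
  have hc : 0 < e * g + 1 := by positivity
  rw [gt_iff_lt, div_lt_iff₀ (by positivity)] at hn'
  have hne : 0 < n * e - b * (e * g + 1) := by nlinarith [mul_pos hm hb, sq_nonneg b]
  set s : ℝ := Real.sqrt (4 * m * (e * g + 1) * (n * e - b * (e * g + 1))) with hs
  have hs2 : s ^ 2 = 4 * m * (e * g + 1) * (n * e - b * (e * g + 1)) := by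
    rw [hs, Real.sq_sqrt (by positivity)]
  have hbny : b + n * y3 = s / (2 * (e * g + 1)) := by
    rw [hy3, ha2, ha1, ha4]
    field_simp
    ring
  have h1 : (e * g + 1) * (b + n * y3) ^ 2 + m * (b * (e * g + 1) - n * e) = 0 := by
    have h2 : (e * g + 1) * (b + n * y3) ^ 2 = s ^ 2 / (4 * (e * g + 1)) := by
      rw [hbny]; field_simp; ring
    rw [h2, hs2]; field_simp; ring
  exact ⟨h1, by rw [h1]; simp⟩
end

section
/- Under the hypotheses n > ((eg+1)b² + m(eg+1)b)/(me) and a₄ < a < e(m+b)/b, with y₂ = (−a₂ − √Δ)/(2a₁) and y₃ = −a₂/(2a₁), one has y₂ < y₃, M(y₂) < 0, hence det(J) at E₂ is negative and E₂ is a saddle point. -/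
theorem E2_saddle
    (a b e g m n : ℝ) (hb : 0 < b) (hg : 0 < g) (hm : 0 < m) (hn : 0 < n)
    (he0 : 0 < e) (he1 : e < 1)
    (a1 a2 a3 a4 Δ y2 y3 : ℝ)
    (ha1 : a1 = (e * g + 1) * n)
    (ha2 : a2 = (b + m) * (e * g + 1) + n * (e - a))
    (ha3 : a3 = e * (m + b) - a * b)
    (ha4 : a4 = ((e * n - (b - m) * (e * g + 1)) +
        Real.sqrt (4 * m * (e * g + 1) * (n * e - b * (e * g + 1)))) / n)
    (hΔ : Δ = a2 ^ 2 - 4 * a1 * a3)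
    (hy2 : y2 = (-a2 - Real.sqrt Δ) / (2 * a1))
    (hy3 : y3 = -a2 / (2 * a1))
    (hn' : n > ((e * g + 1) * b ^ 2 + m * (e * g + 1) * b) / (m * e))
    (ha' : a4 < a) (ha'' : a < e * (m + b) / b) :
    y2 < y3 ∧
      (e * g + 1) * (b + n * y2) ^ 2 + m * (b * (e * g + 1) - n * e) < 0 ∧
      y2 * ((e * g + 1) * (b + n * y2) ^ 2 + m * (b * (e * g + 1) - n * e)) /
        ((1 + g * y2) * (b + n * y2) ^ 2) < 0 := by
  have hc : (0:ℝ) < e * g + 1 := by positivity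
  have hme : (0:ℝ) < m * e := by positivity
  have hn2 : (e*g+1)*b^2 + m*(e*g+1)*b < n*(m*e) := (div_lt_iff₀ hme).mp hn'
  have h5 : (e*g+1)*b^2 < m*(n*e - b*(e*g+1)) := by nlinarith only [hn2]
  have hQ : 0 < n*e - b*(e*g+1) := by
    nlinarith only [h5, hm, mul_pos hc (mul_pos hb hb)]
  have hD'0 : (0:ℝ) ≤ 4 * m * (e * g + 1) * (n * e - b * (e * g + 1)) := by positivity
  set sD := Real.sqrt (4 * m * (e * g + 1) * (n * e - b * (e * g + 1))) with hsD
  have hsD2 : sD^2 = 4 * m * (e * g + 1) * (n * e - b * (e * g + 1)) := Real.sq_sqrt hD'0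
  have hsD0 : 0 ≤ sD := Real.sqrt_nonneg _
  have h4 : (2*(e*g+1)*b)^2 < sD^2 := by
    rw [hsD2]; nlinarith only [h5, hc]
  have hsDgt : 2*(e*g+1)*b < sD := lt_of_pow_lt_pow_left₀ 2 hsD0 h4
  set P := n*a + (e*g+1)*(b-m) - n*e with hP
  have hPsD : sD < P := by
    rw [ha4] at ha'
    have h := (div_lt_iff₀ hn).mp ha'
    rw [hP]; linarith only [h]
  have hsDpos : 0 < sD := lt_trans (by positivity) hsDgt
  have hsD2pos : 0 < sD^2 := pow_pos hsDpos 2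
  have hP0 : 0 < P := lt_of_le_of_lt hsD0 hPsD
  have hΔeq : Δ = P^2 - sD^2 := by
    rw [hΔ, ha1, ha2, ha3, hsD2, hP]; ring
  have hΔpos : 0 < Δ := by
    rw [hΔeq]
    nlinarith only [hPsD, hsD0, hP0, mul_pos (sub_pos.mpr hPsD) (by linarith : (0:ℝ) < P + sD)]
  set sΔ := Real.sqrt Δ with hsΔ
  have hsΔ2 : sΔ^2 = Δ := Real.sq_sqrt hΔpos.le
  have hsΔpos : 0 < sΔ := Real.sqrt_pos.mpr hΔpos
  have h6 : sΔ^2 < P^2 := by rw [hsΔ2, hΔeq]; linarith only [hsD2pos]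
  have hsΔltP : sΔ < P := lt_of_pow_lt_pow_left₀ 2 hP0.le h6
  have ha1pos : 0 < a1 := by rw [ha1]; positivity
  have ha3pos : 0 < a3 := by
    have h7 := (lt_div_iff₀ hb).mp ha''
    rw [ha3]; linarith only [h7]
  have hma2 : -a2 = P - 2*(e*g+1)*b := by rw [ha2, hP]; ring
  have ha2neg : 0 < -a2 := by rw [hma2]; linarith only [hPsD, hsDgt]
  have h8 : sΔ^2 < (-a2)^2 := by
    rw [hsΔ2, hΔ]; nlinarith only [mul_pos ha1pos ha3pos]
  have hsΔlta2 : sΔ < -a2 := lt_of_pow_lt_pow_left₀ 2 ha2neg.le h8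
  have hy2pos : 0 < y2 := by
    rw [hy2]
    exact div_pos (by linarith only [hsΔlta2]) (by linarith only [ha1pos])
  have hs2 : sΔ^2 = P^2 - 4*m*(e*g+1)*(n*e - b*(e*g+1)) := by
    rw [hsΔ2, hΔeq, hsD2]
  have hkey : b + n*y2 = (P - sΔ)/(2*(e*g+1)) := by
    rw [hy2, ha1, ha2, hP]
    field_simp
    ring
  have h9 : (2*(e*g+1))*(b + n*y2) = P - sΔ := by
    rw [hkey]; field_simp
  have hMeq : 4*(e*g+1)*((e*g+1) * (b + n*y2)^2 + m*(b*(e*g+1) - n*e))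
      = 2*sΔ*(sΔ - P) := by
    linear_combination ((2*(e*g+1))*(b + n*y2) + P - sΔ) * h9 - hs2
  have hneg : 2*sΔ*(sΔ - P) < 0 :=
    mul_neg_of_pos_of_neg (by positivity) (by linarith only [hsΔltP])
  have h4c : (0:ℝ) < 4*(e*g+1) := by positivity
  have hMneg : (e*g+1) * (b + n*y2)^2 + m*(b*(e*g+1) - n*e) < 0 := by
    nlinarith only [hMeq, hneg, h4c]
  refine ⟨?_, hMneg, ?_⟩
  · rw [hy2, hy3, div_lt_div_iff₀ (by linarith only [ha1pos]) (by linarith only [ha1pos])]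
    nlinarith only [hsΔpos, ha1pos, mul_pos hsΔpos ha1pos]
  · apply div_neg_of_neg_of_pos
    · exact mul_neg_of_pos_of_neg hy2pos hMneg
    · have hb2 : 0 < b + n*y2 := by
        rw [hkey]
        exact div_pos (by linarith only [hsΔltP]) (by positivity)
      exact mul_pos (by nlinarith only [mul_pos hg hy2pos]) (pow_pos hb2 2)
end

section
/- Under the hypotheses n > ((eg+1)b² + m(eg+1)b)/(me) and a₄ < a ≤ e(m+b)/b, with y₁ = (−a₂ + √Δ)/(2a₁) and y₃ = −a₂/(2a₁), one has y₃ < y₁ and M(y₁) > 0, hence det(J) at the equilibrium E₁ is positive. -/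
set_option maxHeartbeats 1000000 in
theorem E1_det_positive
    (a b e g m n : ℝ) (hb : 0 < b) (hg : 0 < g) (hm : 0 < m) (hn : 0 < n)
    (he0 : 0 < e) (he1 : e < 1)
    (a1 a2 a3 a4 Δ y1 y3 : ℝ)
    (ha1 : a1 = (e * g + 1) * n)
    (ha2 : a2 = (b + m) * (e * g + 1) + n * (e - a))
    (ha3 : a3 = e * (m + b) - a * b)
    (ha4 : a4 = ((e * n - (b - m) * (e * g + 1)) +
        Real.sqrt (4 * m * (e * g + 1) * (n * e - b * (e * g + 1)))) / n)
    (hΔ : Δ = a2 ^ 2 - 4 * a1 * a3)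
    (hy1 : y1 = (-a2 + Real.sqrt Δ) / (2 * a1))
    (hy3 : y3 = -a2 / (2 * a1))
    (hn' : n > ((e * g + 1) * b ^ 2 + m * (e * g + 1) * b) / (m * e))
    (ha' : a4 < a) (ha'' : a ≤ e * (m + b) / b) :
    y3 < y1 ∧
      (e * g + 1) * (b + n * y1) ^ 2 + m * (b * (e * g + 1) - n * e) > 0 ∧
      y1 * ((e * g + 1) * (b + n * y1) ^ 2 + m * (b * (e * g + 1) - n * e)) /
        ((1 + g * y1) * (b + n * y1) ^ 2) > 0 := by
  set P := e * g + 1 with hP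
  have hP0 : 0 < P := by positivity
  set K := 4 * m * P * (n * e - b * P) with hKdef
  set t := Real.sqrt K with htdef
  set c := 2 * b * P - a2 with hcdef
  clear_value c t K P
  have hme : (0:ℝ) < m * e := by positivity
  have hn'' : ((P) * b ^ 2 + m * P * b) < n * (m * e) := (div_lt_iff₀ hme).mp hn'
  have h5 : P * b ^ 2 < m * (n * e - b * P) := by linarith
  have h6 : 0 < m * (n * e - b * P) := lt_trans (by positivity) h5
  have hK0 : 0 < K := by rw [hKdef]; linarith [mul_pos hP0 h6]
  have ht2 : t ^ 2 = K := by rw [htdef]; exact Real.sq_sqrt hK0.le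
  have ht0 : 0 ≤ t := by rw [htdef]; exact Real.sqrt_nonneg K
  have hct : t < c := by
    have h4 : a4 * n = (e * n - (b - m) * P) + t := by
      rw [ha4]; field_simp
    have hc2 : c = a * n - e * n + (b - m) * P := by rw [hcdef, ha2]; ring
    have haa : a4 * n < a * n := mul_lt_mul_of_pos_right ha' hn
    linarith
  have hΔeq : Δ = c ^ 2 - K := by
    rw [hΔ, hcdef, ha1, ha2, ha3, hKdef]; ring
  have hc2t : t ^ 2 < c ^ 2 := pow_lt_pow_left₀ hct ht0 two_ne_zero
  have hΔ0 : 0 < Δ := by rw [hΔeq]; linarith [ht2]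
  set s := Real.sqrt Δ with hsdef
  clear_value s
  have hs0 : 0 < s := by rw [hsdef]; exact Real.sqrt_pos.mpr hΔ0
  have hs2 : s ^ 2 = Δ := by rw [hsdef]; exact Real.sq_sqrt hΔ0.le
  have h7 : (2 * b * P) ^ 2 < t ^ 2 := by
    rw [ht2, hKdef]; linarith [mul_lt_mul_of_pos_left h5 hP0]
  have htb : 2 * b * P < t := lt_of_pow_lt_pow_left₀ 2 ht0 h7
  have ha2neg : a2 < 0 := by
    have : 2 * b * P - a2 > 2 * b * P := by rw [← hcdef]; linarith
    linarith
  have ha10 : 0 < a1 := by rw [ha1]; positivity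
  have hy1eq : 2 * a1 * y1 = -a2 + s := by
    rw [hy1]; field_simp
  have hy3eq : 2 * a1 * y3 = -a2 := by
    rw [hy3]; field_simp
  have hy31 : y3 < y1 := by
    have h : 2 * a1 * y3 < 2 * a1 * y1 := by rw [hy3eq, hy1eq]; linarith
    exact lt_of_mul_lt_mul_left h (by positivity)
  have hy1pos : 0 < y1 := by
    rw [hy1]; apply div_pos (by linarith) (by positivity)
  have hPn : 2 * P * n * y1 = -a2 + s := by
    rw [ha1] at hy1eq; linear_combination hy1eq
  have h1 : 2 * P * (b + n * y1) = c + s := by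
    rw [hcdef]; linear_combination hPn
  have h2 : (c + s) ^ 2 = 4 * P ^ 2 * (b + n * y1) ^ 2 := by rw [← h1]; ring
  have hM : 4 * P * (P * (b + n * y1) ^ 2 + m * (b * P - n * e)) = (c + s) ^ 2 - K := by
    rw [hKdef]; linear_combination (-1 : ℝ) * h2
  have hMpos : P * (b + n * y1) ^ 2 + m * (b * P - n * e) > 0 := by
    have hcs : t < c + s := by linarith
    have hcs2 : t ^ 2 < (c + s) ^ 2 := pow_lt_pow_left₀ hcs ht0 two_ne_zero
    by_contra hcon
    push_neg at hcon
    have h8 : 4 * P * (P * (b + n * y1) ^ 2 + m * (b * P - n * e)) ≤ 0 :=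
      mul_nonpos_iff.mpr (Or.inl ⟨by positivity, hcon⟩)
    rw [hM] at h8
    linarith
  refine ⟨hy31, hMpos, ?_⟩
  have hden : 0 < (1 + g * y1) * (b + n * y1) ^ 2 := by positivity
  exact div_pos (mul_pos hy1pos hMpos) hden
end
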